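/- arXiv:0711.3669 — 2 statements merged into one kernel-verified Lean document; each statement's English description precedes it below -/
import Mathlib

section
/- Let (E_*(x))_{x∈I} be a family of chain complexes of Banach spaces, each 1-split via contractions, and suppose for each n the boundary maps d_n^x are uniformly bounded in x. Then for any p ∈ [1,∞], the ℓᵖ-direct sum complex ⊕ᵖ_{x∈I} E_*(x) is 1-split, and in particular exact. -/
open scoped ENNReal

private lemma memℓp_of_le_aux {ι : Type*} {p : ℝ≥0∞} {E F : ι → Type*}
    [∀ i, NormedAddCommGroup (E i)] [∀ i, NormedAddCommGroup (F i)]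
    {f : ∀ i, E i} {g : ∀ i, F i} (hg : Memℓp g p) (h : ∀ i, ‖f i‖ ≤ ‖g i‖) :
    Memℓp f p := by
  rcases p.trichotomy with rfl | rfl | hp
  · refine memℓp_zero (hg.finite_dsupport.subset fun i hi => ?_)
    simp only [Set.mem_setOf_eq] at hi ⊢
    intro hgi
    apply hi
    have := h i
    rw [hgi, norm_zero] at this
    exact norm_eq_zero.mp (this.antisymm (norm_nonneg _))
  · apply memℓp_infty
    obtain ⟨C, hC⟩ := hg.bddAbove
    exact ⟨C, by rintro - ⟨i, rfl⟩; exact (h i).trans (hC ⟨i, rfl⟩)⟩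
  · apply memℓp_gen
    refine Summable.of_nonneg_of_le (fun i => Real.rpow_nonneg (norm_nonneg _) _)
      (fun i => Real.rpow_le_rpow (norm_nonneg _) (h i) hp.le) (hg.summable hp)

private lemma lp_norm_le_of_le_aux {ι : Type*} {p : ℝ≥0∞} [Fact (1 ≤ p)] {E F : ι → Type*}
    [∀ i, NormedAddCommGroup (E i)] [∀ i, NormedAddCommGroup (F i)]
    {f : lp E p} {g : lp F p} (h : ∀ i, ‖f i‖ ≤ ‖g i‖) : ‖f‖ ≤ ‖g‖ := by
  rcases p.dichotomy with rfl | hp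
  · exact lp.norm_le_of_forall_le (norm_nonneg g) fun i =>
      (h i).trans (lp.norm_apply_le_norm ENNReal.top_ne_zero g i)
  · have hp' : 0 < p.toReal := lt_of_lt_of_le zero_lt_one hp
    refine lp.norm_le_of_forall_sum_le hp' (norm_nonneg g) fun t => ?_
    calc ∑ i ∈ t, ‖f i‖ ^ p.toReal ≤ ∑ i ∈ t, ‖g i‖ ^ p.toReal := by
          exact Finset.sum_le_sum fun i _ =>
            Real.rpow_le_rpow (norm_nonneg _) (h i) hp'.le
      _ ≤ ‖g‖ ^ p.toReal := lp.sum_rpow_le_norm_rpow hp' g t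

/-- An `ℓᵖ`-direct sum of uniformly bounded, `1`-split chain complexes of Banach spaces is
again `1`-split, and in particular exact. Here `D` is the coordinatewise boundary map of
the sum complex. -/
theorem lp_sum_of_one_split_is_one_split
    {ι : Type*} (p : ℝ≥0∞) [Fact (1 ≤ p)]
    (E : ι → ℕ → Type*) [∀ x n, NormedAddCommGroup (E x n)] [∀ x n, NormedSpace ℂ (E x n)]
    [∀ x n, CompleteSpace (E x n)]
    (d : ∀ x n, E x (n + 1) →L[ℂ] E x n)
    (hcomplex : ∀ x n (v : E x (n + 2)), d x n (d x (n + 1) v) = 0)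
    (hdbdd : ∀ n, ∃ C : ℝ, ∀ x, ‖d x n‖ ≤ C)
    (s : ∀ x n, E x n →L[ℂ] E x (n + 1))
    (hscontr : ∀ x n, ‖s x n‖ ≤ 1)
    (hs0 : ∀ x (v : E x 0), d x 0 (s x 0 v) = v)
    (hsj : ∀ x (j : ℕ) (v : E x (j + 1)),
      s x j (d x j v) + d x (j + 1) (s x (j + 1) v) = v)
    (D : ∀ n, lp (fun x => E x (n + 1)) p →L[ℂ] lp (fun x => E x n) p)
    (hD : ∀ n (v : lp (fun x => E x (n + 1)) p) (x : ι), D n v x = d x n (v x)) :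
    (∃ S : ∀ n, lp (fun x => E x n) p →L[ℂ] lp (fun x => E x (n + 1)) p,
        (∀ n (v : lp (fun x => E x n) p) (x : ι), S n v x = s x n (v x)) ∧
        (∀ n, ‖S n‖ ≤ 1) ∧
        (∀ v, D 0 (S 0 v) = v) ∧
        (∀ (n : ℕ) (v : lp (fun x => E x (n + 1)) p),
          S n (D n v) + D (n + 1) (S (n + 1) v) = v)) ∧
      Function.Surjective (D 0) ∧
      (∀ n : ℕ, {v : lp (fun x => E x (n + 1)) p | D n v = 0} = Set.range (D (n + 1))) := by
  -- pointwise norm estimate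
  have hptwise : ∀ n (v : lp (fun x => E x n) p) (x : ι),
      ‖s x n (v x)‖ ≤ ‖v x‖ := fun n v x =>
    ((s x n).le_opNorm _).trans (mul_le_of_le_one_left (norm_nonneg _) (hscontr x n))
  have hmem : ∀ n (v : lp (fun x => E x n) p),
      Memℓp (fun x => s x n (v x)) p := fun n v =>
    memℓp_of_le_aux (lp.memℓp v) (hptwise n v)
  -- the coordinatewise splitting map on the sum
  have Sdef : ∀ n, ∃ S : lp (fun x => E x n) p →L[ℂ] lp (fun x => E x (n + 1)) p,
      (∀ (v : lp (fun x => E x n) p) (x : ι), S v x = s x n (v x)) ∧ ‖S‖ ≤ 1 := by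
    intro n
    refine ⟨LinearMap.mkContinuous
      { toFun := fun v => ⟨fun x => s x n (v x), hmem n v⟩
        map_add' := fun v w => by
          ext x
          simp [lp.coeFn_add]
          rfl
        map_smul' := fun c v => by
          ext x
          simp [lp.coeFn_smul] }
      1 (fun v => ?_), fun v x => rfl, LinearMap.mkContinuous_norm_le _ zero_le_one _⟩
    rw [one_mul]
    exact lp_norm_le_of_le_aux fun x => hptwise n v x
  choose S hS hSnorm using Sdef
  have hkey0 : ∀ v, D 0 (S 0 v) = v := by
    intro v
    apply lp.ext
    funext x
    rw [hD, hS, hs0]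
  have hkey : ∀ (n : ℕ) (v : lp (fun x => E x (n + 1)) p),
      S n (D n v) + D (n + 1) (S (n + 1) v) = v := by
    intro n v
    apply lp.ext
    funext x
    have : (↑(S n (D n v) + D (n + 1) (S (n + 1) v)) : ∀ x, E x (n + 1)) x
        = S n (D n v) x + D (n + 1) (S (n + 1) v) x := by
      rw [lp.coeFn_add]; rfl
    rw [this, hS, hD n v x, hD, hS, hsj]
  refine ⟨⟨S, hS, hSnorm, hkey0, hkey⟩, fun v => ⟨S 0 v, hkey0 v⟩, fun n => ?_⟩
  ext v
  simp only [Set.mem_setOf_eq, Set.mem_range]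
  constructor
  · intro hv
    refine ⟨S (n + 1) v, ?_⟩
    have := hkey n v
    rw [hv, map_zero, zero_add] at this
    exact this
  · rintro ⟨w, rfl⟩
    apply lp.ext
    funext x
    rw [hD, hD, hcomplex]
    exact (congrFun (lp.coeFn_zero (fun x => E x n) p) x).symm
end

section
/- Every free group is commutative-transitive: in a free group F, if a, b, c are nontrivial elements with ab = ba and bc = cb, then ac = ca. -/
open FreeGroup in
/-- Anything commuting with a generator of a free group is a power of that generator. -/
lemma freeGroup_commute_of_aux {α : Type*} [DecidableEq α] (j : α) :
    ∀ n (x : FreeGroup α), x.toWord.length = n → Commute x (FreeGroup.of j) →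
      ∃ m : ℤ, x = FreeGroup.of j ^ m := by
  classical
  intro n
  induction n using Nat.strong_induction_on with
  | _ n ih =>
  intro x hn hcomm
  rcases hw : x.toWord with _ | ⟨⟨i, bb⟩, tl⟩
  · exact ⟨0, by simpa using FreeGroup.toWord_eq_nil_iff.mp hw⟩
  have hred : reduce x.toWord = x.toWord := x.reduce_toWord
  by_cases hij : i = j
  · subst hij
    cases bb with
    | false =>
      have hx' : (FreeGroup.of i * x).toWord = tl := by
        conv_lhs => rw [← mk_toWord (x := x)]
        rw [show FreeGroup.of i = mk [(i, true)] from rfl, mul_mk, toWord_mk,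
          List.singleton_append, reduce.cons, hred, hw]
        simp
      have hlt : tl.length < n := by
        have := congrArg List.length hw; simp at this; omega
      obtain ⟨m, hm⟩ := ih _ hlt (FreeGroup.of i * x) (by rw [hx'])
        ((Commute.refl (FreeGroup.of i)).mul_left hcomm)
      refine ⟨m - 1, ?_⟩
      rw [show x = (FreeGroup.of i)⁻¹ * (FreeGroup.of i * x) by group, hm]
      group
    | true =>
      have hx' : ((FreeGroup.of i)⁻¹ * x).toWord = tl := by
        conv_lhs => rw [← mk_toWord (x := x)]
        rw [show (FreeGroup.of i)⁻¹ = mk [(i, false)] by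
            rw [show FreeGroup.of i = mk [(i, true)] from rfl, inv_mk]; rfl,
          mul_mk, toWord_mk, List.singleton_append, reduce.cons, hred, hw]
        simp
      have hlt : tl.length < n := by
        have := congrArg List.length hw; simp at this; omega
      obtain ⟨m, hm⟩ := ih _ hlt ((FreeGroup.of i)⁻¹ * x) (by rw [hx'])
        (((Commute.refl (FreeGroup.of i)).inv_left).mul_left hcomm)
      refine ⟨m + 1, ?_⟩
      rw [show x = FreeGroup.of i * ((FreeGroup.of i)⁻¹ * x) by group, hm]
      group
  · -- head letter is not j^±1 : derive a contradiction
    exfalso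
    have heq : (x * FreeGroup.of j).toWord = (FreeGroup.of j * x).toWord := by
      rw [hcomm.eq]
    have hrhs : (FreeGroup.of j * x).toWord = (j, true) :: x.toWord := by
      conv_lhs => rw [← mk_toWord (x := x)]
      rw [show FreeGroup.of j = mk [(j, true)] from rfl, mul_mk, toWord_mk,
        List.singleton_append, reduce.cons, hred, hw]
      simp [Ne.symm hij]
    have hlhs : (x * FreeGroup.of j).toWord = reduce (x.toWord ++ [(j, true)]) := by
      conv_lhs => rw [← mk_toWord (x := x)]
      rw [show FreeGroup.of j = mk [(j, true)] from rfl, mul_mk, toWord_mk]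
    -- compute the right-append reduction via invRev
    have hinv : invRev (x.toWord ++ [(j, true)]) = (j, false) :: invRev x.toWord := by
      simp [invRev]
    have hredv : reduce (invRev x.toWord) = invRev x.toWord := by
      rw [reduce_invRev, hred]
    have hL : reduce (x.toWord ++ [(j, true)]) =
        invRev (reduce ((j, false) :: invRev x.toWord)) := by
      conv_lhs => rw [← invRev_invRev (L₁ := x.toWord ++ [(j, true)])]
      rw [reduce_invRev, hinv]
    rcases hv : invRev x.toWord with _ | ⟨⟨k, cc⟩, vt⟩
    · have : x.toWord = [] := by
        have := congrArg invRev hv; rwa [invRev_invRev, invRev_empty] at this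
      rw [this] at hw; exact nomatch hw
    by_cases hcancel : j = k ∧ cc = true
    · -- the last letter of x.toWord cancels: lengths give a contradiction
      obtain ⟨rfl, rfl⟩ := hcancel
      have h1 : reduce ((j, false) :: invRev x.toWord) = vt := by
        rw [reduce.cons, hredv, hv]; simp
      have h2 : reduce (x.toWord ++ [(j, true)]) = invRev vt := by rw [hL, h1]
      have hlen : (invRev vt).length = x.toWord.length - 1 := by
        have h3 := congrArg List.length hv
        rw [invRev_length] at h3 ⊢
        simp at h3; omega
      have h4 : ((j, true) :: x.toWord).length = x.toWord.length + 1 := rfl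
      have h5 := congrArg List.length (hlhs.symm.trans (heq.trans hrhs))
      rw [h2] at h5
      have hpos : 0 < x.toWord.length := by rw [hw]; simp
      rw [hlen] at h5; simp at h5
    · -- no cancellation: the two reduced words must be equal, forcing i = j
      have h1 : reduce ((j, false) :: invRev x.toWord) = (j, false) :: invRev x.toWord := by
        rw [reduce.cons, hredv, hv]
        have : ¬(j = k ∧ false = !cc) := by
          rintro ⟨rfl, h⟩; exact hcancel ⟨rfl, by simpa using h.symm⟩
        simp [this]
        rintro rfl rfl
        exact absurd ⟨rfl, rfl⟩ hcancel
      have h2 : reduce (x.toWord ++ [(j, true)]) = x.toWord ++ [(j, true)] := by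
        rw [hL, h1, ← hinv, invRev_invRev]
      have h3 : x.toWord ++ [(j, true)] = (j, true) :: x.toWord := by
        rw [← h2, ← hlhs, heq, hrhs]
      rw [hw] at h3
      have := (List.cons.injEq _ _ _ _).mp h3.symm
      exact hij ((Prod.mk.injEq _ _ _ _).mp this.1.symm).1

lemma freeGroup_commute_of {α : Type*} [DecidableEq α] (j : α) (x : FreeGroup α)
    (h : Commute x (FreeGroup.of j)) : ∃ m : ℤ, x = FreeGroup.of j ^ m :=
  freeGroup_commute_of_aux j x.toWord.length x rfl h

/-- A free group with a nontrivial central element is commutative. -/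
lemma freeGroup_center_comm {ι : Type*} (x : FreeGroup ι) (hx : x ≠ 1)
    (hcentral : ∀ y : FreeGroup ι, Commute y x) :
    ∀ y z : FreeGroup ι, Commute y z := by
  classical
  have hsub : Subsingleton ι := by
    constructor
    intro i j
    by_contra hij
    obtain ⟨m, hm⟩ := freeGroup_commute_of i x (hcentral _).symm
    obtain ⟨k, hk⟩ := freeGroup_commute_of j x (hcentral _).symm
    have hm0 : m ≠ 0 := by rintro rfl; simp at hm; exact hx hm
    set φ : FreeGroup ι →* Multiplicative ℤ :=
      FreeGroup.lift (fun a => if a = i then Multiplicative.ofAdd (1 : ℤ) else 1) with hφ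
    have h1 : φ x = Multiplicative.ofAdd m := by
      rw [hm, map_zpow, hφ, FreeGroup.lift_apply_of, if_pos rfl, ← ofAdd_zsmul]
      simp
    have h2 : φ x = 1 := by
      rw [hk, map_zpow, hφ, FreeGroup.lift_apply_of, if_neg (fun h => hij h.symm)]
      simp
    rw [h2] at h1
    exact hm0 (by simpa using h1.symm)
  intro y z
  rcases isEmpty_or_nonempty ι with hι | hι
  · have : Subsingleton (FreeGroup ι) := Unique.instSubsingleton
    rw [Commute, SemiconjBy, Subsingleton.elim (y * z) (z * y)]
  · obtain ⟨i⟩ := hι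
    have htop : Subgroup.zpowers (FreeGroup.of i) = ⊤ := by
      rw [← FreeGroup.closure_range_of ι, Subgroup.zpowers_eq_closure]
      congr 1
      ext g
      simp only [Set.mem_singleton_iff, Set.mem_range]
      constructor
      · rintro rfl; exact ⟨i, rfl⟩
      · rintro ⟨a, rfl⟩; rw [Subsingleton.elim a i]
    obtain ⟨m, hm⟩ := (Subgroup.mem_zpowers_iff).mp (htop ▸ Subgroup.mem_top y)
    obtain ⟨k, hk⟩ := (Subgroup.mem_zpowers_iff).mp (htop ▸ Subgroup.mem_top z)
    rw [← hm, ← hk]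
    exact (Commute.refl _).zpow_zpow m k

/-- Every free group is commutative-transitive. -/
theorem freeGroup_commutative_transitive {α : Type*} (a b c : FreeGroup α)
    (ha : a ≠ 1) (hb : b ≠ 1) (hc : c ≠ 1)
    (hab : Commute a b) (hbc : Commute b c) : Commute a c := by
  set K := Subgroup.centralizer ({b} : Set (FreeGroup α)) with hK
  have haK : a ∈ K := Subgroup.mem_centralizer_iff.mpr (by
    rintro g rfl; exact hab.eq.symm)
  have hbK : b ∈ K := Subgroup.mem_centralizer_iff.mpr (by rintro g rfl; rfl)
  have hcK : c ∈ K := Subgroup.mem_centralizer_iff.mpr (by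
    rintro g rfl; exact hbc.eq)
  set A : K := ⟨a, haK⟩
  set B : K := ⟨b, hbK⟩
  set C : K := ⟨c, hcK⟩
  set e := IsFreeGroup.toFreeGroup K with he
  have hcentral : ∀ y : FreeGroup (IsFreeGroup.Generators K), Commute y (e B) := by
    intro y
    have h1 : Commute (e.symm y) B := by
      have h2 := Subgroup.mem_centralizer_iff.mp (e.symm y).2 b rfl
      exact Subtype.ext h2.symm
    have := h1.map e.toMonoidHom
    simpa using this
  have hBne : e B ≠ 1 := by
    simp only [ne_eq, map_eq_one_iff e e.injective]
    intro h
    exact hb (congrArg Subtype.val h)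
  have hAC : Commute (e A) (e C) := freeGroup_center_comm (e B) hBne hcentral _ _
  have := hAC.map e.symm.toMonoidHom
  simp only [MulEquiv.coe_toMonoidHom, MulEquiv.symm_apply_apply] at this
  exact congrArg Subtype.val this.eq
end
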